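/- In the greedy algorithm for the EV valet problem, adding a triple (i,j,t) to the schedule removes from the feasible set at most: all triples (i',j,t) with i' ≠ i (same station/time), and all triples (i,j',t') with t' ∈ [t − C_i, t + C_i], t' ≠ t (same vehicle within the charging window). Consequently, each greedy choice can exclude at most 2 triples of any fixed feasible schedule O that involve vehicle i, plus at most 1 triple of O at station/time (j,t), for a total of at most 3 excluded triples of O (counting (i,j,t) itself if it lies in O). -/

import Mathlib

noncomputable section

variable {V J : Type*}

/-- A feasible schedule for the EV valet problem. -/
def Feasible (avail : V → Finset ℕ) (C : V → ℕ) (A : Finset (V × J × ℕ)) : Prop :=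
  (∀ a ∈ A, a.2.2 ∈ avail a.1) ∧
  (∀ a ∈ A, ∀ b ∈ A, a ≠ b → ¬(a.2.1 = b.2.1 ∧ a.2.2 = b.2.2)) ∧
  (∀ a ∈ A, ∀ b ∈ A, a ≠ b → a.1 = b.1 → C a.1 < max (a.2.2 - b.2.2) (b.2.2 - a.2.2))

/-- Adding the triple `(i,j,t)` removes only triples with the same station/time pair or the
same vehicle within the charging window. -/
def Conflict (C : V → ℕ) (a b : V × J × ℕ) : Prop :=
  (a.2.1 = b.2.1 ∧ a.2.2 = b.2.2) ∨
  (a.1 = b.1 ∧ max (a.2.2 - b.2.2) (b.2.2 - a.2.2) ≤ C a.1)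

open scoped Classical in
/-- A greedy choice `(i,j,t)` excludes from a fixed feasible schedule `O` at most one triple at
station/time `(j,t)`, at most two triples of vehicle `i` with times in `[t − C_i, t + C_i]`,
and hence at most 3 triples of `O` in total. -/
theorem stmt_13 (avail : V → Finset ℕ) (C : V → ℕ)
    (O : Finset (V × J × ℕ)) (hO : Feasible avail C O) (i : V) (j : J) (t : ℕ) :
    (O.filter (fun b => Conflict C (i, j, t) b) ⊆
      O.filter (fun b => b.2.1 = j ∧ b.2.2 = t) ∪
      O.filter (fun b => b.1 = i ∧ max (t - b.2.2) (b.2.2 - t) ≤ C i)) ∧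
    (O.filter (fun b => b.2.1 = j ∧ b.2.2 = t)).card ≤ 1 ∧
    (O.filter (fun b => b.1 = i ∧ max (t - b.2.2) (b.2.2 - t) ≤ C i)).card ≤ 2 ∧
    (O.filter (fun b => Conflict C (i, j, t) b)).card ≤ 3 := by

  obtain ⟨h1, h2, h3⟩ := hO
  have hsub : O.filter (fun b => Conflict C (i, j, t) b) ⊆
      O.filter (fun b => b.2.1 = j ∧ b.2.2 = t) ∪
      O.filter (fun b => b.1 = i ∧ max (t - b.2.2) (b.2.2 - t) ≤ C i) := by
    rw [Finset.subset_iff]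
    intro b hb
    simp only [Finset.mem_filter, Finset.mem_union] at *
    simp only [Conflict] at *
    rcases hb.2 with h | h
    · exact Or.inl ⟨hb.1, h.1.symm, h.2.symm⟩
    · exact Or.inr ⟨hb.1, h.1.symm, h.2⟩
  have hc1 : (O.filter (fun b => b.2.1 = j ∧ b.2.2 = t)).card ≤ 1 := by
    refine Finset.card_le_one.mpr ?_
    intro a ha b hb
    simp only [Finset.mem_filter] at ha hb
    by_contra hne
    exact h2 a ha.1 b hb.1 hne ⟨ha.2.1.trans hb.2.1.symm, ha.2.2.trans hb.2.2.symm⟩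
  have hc2 : (O.filter (fun b => b.1 = i ∧ max (t - b.2.2) (b.2.2 - t) ≤ C i)).card ≤ 2 := by
    by_contra hgt
    push_neg at hgt
    obtain ⟨a, b, c, ha, hb, hc, hab, hac, hbc⟩ := Finset.two_lt_card_iff.mp hgt
    simp only [Finset.mem_filter, max_le_iff] at ha hb hc
    have gab := h3 a ha.1 b hb.1 hab (ha.2.1.trans hb.2.1.symm)
    have gac := h3 a ha.1 c hc.1 hac (ha.2.1.trans hc.2.1.symm)
    have gbc := h3 b hb.1 c hc.1 hbc (hb.2.1.trans hc.2.1.symm)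
    rw [lt_max_iff, ha.2.1] at gab gac
    rw [lt_max_iff, hb.2.1] at gbc
    obtain ⟨-, -, ha1, ha2⟩ := ha
    obtain ⟨-, -, hb1, hb2⟩ := hb
    obtain ⟨-, -, hc1', hc2⟩ := hc
    omega
  refine ⟨hsub, hc1, hc2, ?_⟩
  calc (O.filter (fun b => Conflict C (i, j, t) b)).card
      ≤ (O.filter (fun b => b.2.1 = j ∧ b.2.2 = t) ∪
         O.filter (fun b => b.1 = i ∧ max (t - b.2.2) (b.2.2 - t) ≤ C i)).card :=
        Finset.card_le_card hsub
    _ ≤ _ + _ := Finset.card_union_le _ _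
    _ ≤ 3 := by omega
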